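/- Coercivity of the relative entropy on compacts: fix 0 < r < R, 0 < θ̲ < θ̄ and define for ρ,Θ,𝔯,𝔗 > 0, m,𝔲 ∈ ℝ^N the relative entropy 𝔈(ρ,m,Θ | 𝔯,𝔲,𝔗) = (1/2)ρ|m/ρ − 𝔲|² + ρe(ρ,Θ) − 𝔗 ρ s(ρ,Θ) − ∂_𝔯 H_𝔗(𝔯,𝔗)(ρ−𝔯) − H_𝔗(𝔯,𝔗), with e(ρ,Θ)=c_V Θ, s(ρ,Θ)=log(Θ^{c_V}/ρ), H_𝔗(𝔯,θ)=𝔯e(𝔯,θ)−𝔗𝔯s(𝔯,θ), c_V(γ−1)=1, γ>1. Then there exists C>0 depending on r,R,θ̲,θ̄ such that whenever ρ,𝔯 ∈ [r,R] and Θ,𝔗 ∈ [θ̲,θ̄]: 𝔈(ρ,m,Θ | 𝔯,𝔲,𝔗) ≥ C( (1/2)ρ|m/ρ−𝔲|² + |ρ−𝔯|² + |Θ−𝔗|² ). -/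

import Mathlib

/-- Tangent-line bound for a function whose derivative is `m`-strongly monotone. -/
lemma bregman_lower (f f' : ℝ → ℝ) (a b m : ℝ)
    (hf : ∀ t ∈ Set.Icc a b, HasDerivAt f (f' t) t)
    (hf' : ∀ s t, a ≤ s → s ≤ t → t ≤ b → m * (t - s) ≤ f' t - f' s)
    (x y : ℝ) (hx : x ∈ Set.Icc a b) (hy : y ∈ Set.Icc a b) :
    f x + f' x * (y - x) + m / 2 * (y - x) ^ 2 ≤ f y := by
  set g : ℝ → ℝ := fun t => f t - f' x * t - m / 2 * (t - x) ^ 2 with hg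
  have hgd : ∀ t ∈ Set.Icc a b, HasDerivAt g (f' t - f' x - m * (t - x)) t := by
    intro t ht
    have h1 : HasDerivAt (fun t : ℝ => m / 2 * (t - x) ^ 2) (m / 2 * (2 * (t - x))) t := by
      have : HasDerivAt (fun t : ℝ => (t - x) ^ 2) (2 * (t - x) ^ 1 * 1) t :=
        ((hasDerivAt_id t).sub_const x).pow 2
      simpa using this.const_mul (m / 2)
    have h2 : HasDerivAt (fun t : ℝ => f' x * t) (f' x) t := by
      simpa using (hasDerivAt_id t).const_mul (f' x)
    have := ((hf t ht).sub h2).sub h1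
    exact this.congr_deriv (by ring)
  have key : g x ≤ g y := by
    rcases le_total x y with hxy | hxy
    · have hmono : MonotoneOn g (Set.Icc x b) := by
        apply monotoneOn_of_deriv_nonneg (convex_Icc x b)
        · exact ContinuousOn.mono (fun t ht => (hgd t ht).continuousAt.continuousWithinAt)
            (Set.Icc_subset_Icc hx.1 le_rfl)
        · intro t ht
          rw [interior_Icc] at ht
          exact ((hgd t ⟨le_trans hx.1 ht.1.le, ht.2.le⟩).differentiableAt).differentiableWithinAt
        · intro t ht
          rw [interior_Icc] at ht
          rw [(hgd t ⟨le_trans hx.1 ht.1.le, ht.2.le⟩).deriv]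
          have := hf' x t hx.1 ht.1.le ht.2.le
          linarith
      exact hmono (Set.left_mem_Icc.2 (le_trans hxy hy.2)) ⟨hxy, hy.2⟩ hxy
    · have hanti : AntitoneOn g (Set.Icc a x) := by
        apply antitoneOn_of_deriv_nonpos (convex_Icc a x)
        · exact ContinuousOn.mono (fun t ht => (hgd t ht).continuousAt.continuousWithinAt)
            (Set.Icc_subset_Icc le_rfl hx.2)
        · intro t ht
          rw [interior_Icc] at ht
          exact ((hgd t ⟨ht.1.le, le_trans ht.2.le hx.2⟩).differentiableAt).differentiableWithinAt
        · intro t ht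
          rw [interior_Icc] at ht
          rw [(hgd t ⟨ht.1.le, le_trans ht.2.le hx.2⟩).deriv]
          have := hf' t x ht.1.le ht.2.le hx.2
          linarith
      exact hanti ⟨hy.1, hxy⟩ (Set.right_mem_Icc.2 (le_trans hy.1 hxy)) hxy
  have : f x - f' x * x - 0 ≤ f y - f' x * y - m / 2 * (y - x) ^ 2 := by
    simpa [hg] using key
  nlinarith [this]


set_option maxHeartbeats 1600000 in
theorem relative_entropy_coercivity (N : ℕ) (γ cV r R θl θu : ℝ)
    (hγ : 1 < γ) (hcV : 0 < cV) (hrel : cV * (γ - 1) = 1)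
    (hr : 0 < r) (hrR : r < R) (hθl : 0 < θl) (hθ : θl < θu) :
    ∃ C > 0, ∀ ρ 𝔯 Θ 𝔗 : ℝ,
      ρ ∈ Set.Icc r R → 𝔯 ∈ Set.Icc r R → Θ ∈ Set.Icc θl θu → 𝔗 ∈ Set.Icc θl θu →
      ∀ m 𝔲 : EuclideanSpace ℝ (Fin N),
      C * ((1 / 2) * ρ * ‖ρ⁻¹ • m - 𝔲‖ ^ 2 + |ρ - 𝔯| ^ 2 + |Θ - 𝔗| ^ 2)
        ≤ (1 / 2) * ρ * ‖ρ⁻¹ • m - 𝔲‖ ^ 2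
          + ρ * (cV * Θ) - 𝔗 * (ρ * Real.log (Θ ^ cV / ρ))
          - deriv (fun x : ℝ => x * (cV * 𝔗) - 𝔗 * (x * Real.log (𝔗 ^ cV / x))) 𝔯
              * (ρ - 𝔯)
          - (𝔯 * (cV * 𝔗) - 𝔗 * (𝔯 * Real.log (𝔗 ^ cV / 𝔯))) := by
  have hR : 0 < R := hr.trans hrR
  have hθu : 0 < θu := hθl.trans hθ
  have hCpos : 0 < min 1 (min (θl * (1 / R) / 2) (cV * r * (θl / θu ^ 2) / 2)) := by
    have h1 : 0 < θl * (1 / R) / 2 := by positivity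
    have h2 : 0 < cV * r * (θl / θu ^ 2) / 2 := by positivity
    exact lt_min one_pos (lt_min h1 h2)
  refine ⟨min 1 (min (θl * (1 / R) / 2) (cV * r * (θl / θu ^ 2) / 2)), hCpos, ?_⟩
  intro ρ 𝔯 Θ 𝔗 hρ h𝔯 hΘ h𝔗 m 𝔲
  set C := min 1 (min (θl * (1 / R) / 2) (cV * r * (θl / θu ^ 2) / 2)) with hCdef
  have hρ0 : 0 < ρ := lt_of_lt_of_le hr hρ.1
  have h𝔯0 : 0 < 𝔯 := lt_of_lt_of_le hr h𝔯.1
  have hΘ0 : 0 < Θ := lt_of_lt_of_le hθl hΘ.1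
  have h𝔗0 : 0 < 𝔗 := lt_of_lt_of_le hθl h𝔗.1
  -- compute the deriv
  have hD : deriv (fun x : ℝ => x * (cV * 𝔗) - 𝔗 * (x * Real.log (𝔗 ^ cV / x))) 𝔯
      = cV * 𝔗 - 𝔗 * (cV * Real.log 𝔗 - Real.log 𝔯 - 1) := by
    have heq : (fun x : ℝ => x * (cV * 𝔗) - 𝔗 * (x * Real.log (𝔗 ^ cV / x)))
        =ᶠ[nhds 𝔯] (fun x : ℝ => x * (cV * 𝔗) - 𝔗 * (x * (cV * Real.log 𝔗 - Real.log x))) := by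
      filter_upwards [eventually_gt_nhds h𝔯0] with x hx
      rw [Real.log_div (by positivity) (ne_of_gt hx), Real.log_rpow h𝔗0]
    have h1 : HasDerivAt (fun x : ℝ => x * (cV * 𝔗)) (cV * 𝔗) 𝔯 := by
      simpa using (hasDerivAt_id 𝔯).mul_const (cV * 𝔗)
    have h2 : HasDerivAt (fun x : ℝ => x * (cV * Real.log 𝔗 - Real.log x))
        (cV * Real.log 𝔗 - Real.log 𝔯 - 1) 𝔯 := by
      have := (hasDerivAt_id 𝔯).mul
        ((hasDerivAt_const 𝔯 (cV * Real.log 𝔗)).sub (Real.hasDerivAt_log (ne_of_gt h𝔯0)))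
      exact this.congr_deriv (by simp only [Pi.sub_apply, id]; field_simp; ring)
    have hd : HasDerivAt (fun x : ℝ => x * (cV * 𝔗) - 𝔗 * (x * (cV * Real.log 𝔗 - Real.log x)))
        (cV * 𝔗 - 𝔗 * (cV * Real.log 𝔗 - Real.log 𝔯 - 1)) 𝔯 := h1.sub (h2.const_mul 𝔗)
    rw [Filter.EventuallyEq.deriv_eq heq]
    exact hd.deriv
  rw [hD, Real.log_div (by positivity) (ne_of_gt hρ0), Real.log_rpow hΘ0,
    Real.log_div (by positivity) (ne_of_gt h𝔯0), Real.log_rpow h𝔗0]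
  -- Bregman bound in ρ
  have hψ : 𝔯 * Real.log 𝔯 + (Real.log 𝔯 + 1) * (ρ - 𝔯) + (1 / R) / 2 * (ρ - 𝔯) ^ 2
      ≤ ρ * Real.log ρ := by
    have hder : ∀ t ∈ Set.Icc r R,
        HasDerivAt (fun t : ℝ => t * Real.log t) (Real.log t + 1) t := by
      intro t ht
      have ht0 : 0 < t := lt_of_lt_of_le hr ht.1
      have := (hasDerivAt_id t).mul (Real.hasDerivAt_log (ne_of_gt ht0))
      exact this.congr_deriv (by simp only [id]; field_simp)
    have hmon : ∀ s t : ℝ, r ≤ s → s ≤ t → t ≤ R →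
        1 / R * (t - s) ≤ (Real.log t + 1) - (Real.log s + 1) := by
      intro s t hs hst htb
      have hs0 : 0 < s := lt_of_lt_of_le hr hs
      have ht0 : 0 < t := hs0.trans_le hst
      have hlog : Real.log s - Real.log t ≤ s / t - 1 := by
        have := Real.log_le_sub_one_of_pos (show (0:ℝ) < s / t by positivity)
        rwa [Real.log_div (ne_of_gt hs0) (ne_of_gt ht0)] at this
      have heq1 : 1 - s / t = (t - s) / t := by field_simp
      have h1 : (t - s) / t ≤ Real.log t - Real.log s := by linarith [heq1, hlog]
      have h2 : 1 / R * (t - s) ≤ (t - s) / t := by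
        have hinv : 1 / R ≤ 1 / t := one_div_le_one_div_of_le ht0 htb
        calc 1 / R * (t - s) ≤ 1 / t * (t - s) :=
              mul_le_mul_of_nonneg_right hinv (sub_nonneg.2 hst)
          _ = (t - s) / t := by ring
      linarith
    exact bregman_lower (fun t => t * Real.log t) (fun t => Real.log t + 1) r R (1 / R)
      hder hmon 𝔯 ρ h𝔯 hρ
  -- Bregman bound in Θ
  have hφ : (θl / θu ^ 2) / 2 * (Θ - 𝔗) ^ 2
      ≤ Θ - 𝔗 * Real.log Θ - 𝔗 + 𝔗 * Real.log 𝔗 := by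
    have hder : ∀ t ∈ Set.Icc θl θu,
        HasDerivAt (fun θ : ℝ => θ - 𝔗 * Real.log θ) (1 - 𝔗 / t) t := by
      intro t ht
      have ht0 : 0 < t := lt_of_lt_of_le hθl ht.1
      have := (hasDerivAt_id t).sub ((Real.hasDerivAt_log (ne_of_gt ht0)).const_mul 𝔗)
      exact this.congr_deriv (by simp [div_eq_mul_inv])
    have hmon : ∀ s t : ℝ, θl ≤ s → s ≤ t → t ≤ θu →
        θl / θu ^ 2 * (t - s) ≤ (1 - 𝔗 / t) - (1 - 𝔗 / s) := by
      intro s t hs hst htb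
      have hs0 : 0 < s := lt_of_lt_of_le hθl hs
      have ht0 : 0 < t := hs0.trans_le hst
      have hsu : s ≤ θu := le_trans hst htb
      have heq1 : (1 - 𝔗 / t) - (1 - 𝔗 / s) = 𝔗 * (t - s) / (s * t) := by
        field_simp
        ring_nf
      rw [heq1, div_mul_eq_mul_div,
        div_le_div_iff₀ (by positivity : (0:ℝ) < θu ^ 2) (by positivity : (0:ℝ) < s * t)]
      have hst2 : s * t ≤ θu ^ 2 := by nlinarith
      have hmix : θl * (s * t) ≤ 𝔗 * θu ^ 2 := by nlinarith [h𝔗.1, mul_pos hs0 ht0]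
      nlinarith [mul_le_mul_of_nonneg_right hmix (sub_nonneg.2 hst)]
    have key := bregman_lower (fun θ => θ - 𝔗 * Real.log θ) (fun θ => 1 - 𝔗 / θ)
      θl θu (θl / θu ^ 2) hder hmon 𝔗 Θ h𝔗 hΘ
    have key' : 𝔗 - 𝔗 * Real.log 𝔗 + (1 - 𝔗 / 𝔗) * (Θ - 𝔗)
        + (θl / θu ^ 2) / 2 * (Θ - 𝔗) ^ 2 ≤ Θ - 𝔗 * Real.log Θ := key
    have hz : (1 : ℝ) - 𝔗 / 𝔗 = 0 := by
      rw [div_self (ne_of_gt h𝔗0)]; ring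
    rw [hz, zero_mul] at key'
    linarith
  -- combine
  have hK : (0:ℝ) ≤ (1 / 2) * ρ * ‖ρ⁻¹ • m - 𝔲‖ ^ 2 := by positivity
  set K := (1 / 2) * ρ * ‖ρ⁻¹ • m - 𝔲‖ ^ 2 with hKdef
  clear_value K
  rw [sq_abs, sq_abs]
  have hC1 : C ≤ 1 := min_le_left _ _
  have hC2 : C ≤ θl * (1 / R) / 2 := le_trans (min_le_right _ _) (min_le_left _ _)
  have hC3 : C ≤ cV * r * (θl / θu ^ 2) / 2 := le_trans (min_le_right _ _) (min_le_right _ _)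
  clear_value C
  have hterm1 : C * K ≤ K := by
    have := mul_le_mul_of_nonneg_right hC1 hK
    linarith
  have hterm2 : C * (ρ - 𝔯) ^ 2
      ≤ 𝔗 * (ρ * Real.log ρ - 𝔯 * Real.log 𝔯 - (Real.log 𝔯 + 1) * (ρ - 𝔯)) := by
    have hnn : (0:ℝ) ≤ (ρ - 𝔯) ^ 2 := sq_nonneg _
    have step1 : C * (ρ - 𝔯) ^ 2 ≤ θl * ((1 / R) / 2 * (ρ - 𝔯) ^ 2) := by
      have := mul_le_mul_of_nonneg_right hC2 hnn
      linarith [this]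
    have step2 : θl * ((1 / R) / 2 * (ρ - 𝔯) ^ 2) ≤ 𝔗 * ((1 / R) / 2 * (ρ - 𝔯) ^ 2) :=
      mul_le_mul_of_nonneg_right h𝔗.1 (by positivity)
    have step3 : 𝔗 * ((1 / R) / 2 * (ρ - 𝔯) ^ 2)
        ≤ 𝔗 * (ρ * Real.log ρ - 𝔯 * Real.log 𝔯 - (Real.log 𝔯 + 1) * (ρ - 𝔯)) := by
      apply mul_le_mul_of_nonneg_left _ (le_of_lt h𝔗0)
      linarith [hψ]
    linarith
  have hterm3 : C * (Θ - 𝔗) ^ 2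
      ≤ cV * ρ * (Θ - 𝔗 * Real.log Θ - 𝔗 + 𝔗 * Real.log 𝔗) := by
    have hnn : (0:ℝ) ≤ (Θ - 𝔗) ^ 2 := sq_nonneg _
    have step1 : C * (Θ - 𝔗) ^ 2 ≤ cV * r * ((θl / θu ^ 2) / 2 * (Θ - 𝔗) ^ 2) := by
      have := mul_le_mul_of_nonneg_right hC3 hnn
      linarith [this]
    have step2 : cV * r * ((θl / θu ^ 2) / 2 * (Θ - 𝔗) ^ 2)
        ≤ cV * ρ * ((θl / θu ^ 2) / 2 * (Θ - 𝔗) ^ 2) := by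
      apply mul_le_mul_of_nonneg_right _ (by positivity)
      exact mul_le_mul_of_nonneg_left hρ.1 (le_of_lt hcV)
    have step3 : cV * ρ * ((θl / θu ^ 2) / 2 * (Θ - 𝔗) ^ 2)
        ≤ cV * ρ * (Θ - 𝔗 * Real.log Θ - 𝔗 + 𝔗 * Real.log 𝔗) :=
      mul_le_mul_of_nonneg_left hφ (by positivity)
    linarith
  have hdist : C * (K + (ρ - 𝔯) ^ 2 + (Θ - 𝔗) ^ 2)
      = C * K + C * (ρ - 𝔯) ^ 2 + C * (Θ - 𝔗) ^ 2 := by ring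
  have hre : ρ * (cV * Θ) - 𝔗 * (ρ * (cV * Real.log Θ - Real.log ρ))
      - (cV * 𝔗 - 𝔗 * (cV * Real.log 𝔗 - Real.log 𝔯 - 1)) * (ρ - 𝔯)
      - (𝔯 * (cV * 𝔗) - 𝔗 * (𝔯 * (cV * Real.log 𝔗 - Real.log 𝔯)))
      = cV * ρ * (Θ - 𝔗 * Real.log Θ - 𝔗 + 𝔗 * Real.log 𝔗)
        + 𝔗 * (ρ * Real.log ρ - 𝔯 * Real.log 𝔯 - (Real.log 𝔯 + 1) * (ρ - 𝔯)) := by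
    ring
  linarith [hterm1, hterm2, hterm3, hdist, hre]
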